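/- For a (not necessarily abelian) group G the following are equivalent: (i) G can be endowed with a compatible partial order which is a semiorder and is distinct from the equality relation; (ii) G can be endowed with a compatible partial order which is a weak order and is distinct from the equality relation; (iii) G has a proper normal subgroup H such that the quotient group G/H admits a compatible total order. -/
import Mathlib


namespace ThrPaper

universe u

variable {X : Type*}

/-- The strict order associated to a reflexive relation `le`. -/
def Lt (le : X → X → Prop) (x y : X) : Prop := le x y ∧ ¬ le y x

/-- `x` and `y` are incomparable with respect to `le`. -/
def Incomp (le : X → X → Prop) (x y : X) : Prop := ¬ le x y ∧ ¬ le y x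

/-- `le` is a partial order (reflexive, transitive, antisymmetric). -/
def IsPartialOrderRel (le : X → X → Prop) : Prop :=
  (∀ x, le x x) ∧ (∀ x y z, le x y → le y z → le x z) ∧ ∀ x y, le x y → le y x → x = y

/-- `le` is total. -/
def IsTotalRel (le : X → X → Prop) : Prop := ∀ x y, le x y ∨ le y x

/-- Compatibility of a relation with the (not necessarily abelian) group operation. -/
def IsCompat {G : Type*} [AddGroup G] (le : G → G → Prop) : Prop :=
  ∀ a b x y : G, le x y → le (a + x + b) (a + y + b)

/-- The trace quasi-order `≤_pred`: `x ≤_pred y` iff every `z < x` satisfies `z < y`. -/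
def PredLe (le : X → X → Prop) (x y : X) : Prop := ∀ z, Lt le z x → Lt le z y

/-- The trace quasi-order `≤_succ`: `x ≤_succ y` iff every `z > y` satisfies `z > x`. -/
def SuccLe (le : X → X → Prop) (x y : X) : Prop := ∀ z, Lt le y z → Lt le x z

/-- `le` is a threshold order: `≤_pred` and `≤_succ` are equal and are total orders. -/
def IsThresholdOrder (le : X → X → Prop) : Prop :=
  (∀ x y, PredLe le x y ↔ SuccLe le x y) ∧
  (∀ x y, PredLe le x y ∨ PredLe le y x) ∧
  ∀ x y, PredLe le x y → PredLe le y x → x = y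

/-- The poset `2 ⊕ 2` embeds into `le`. -/
def Embeds2p2 (le : X → X → Prop) : Prop :=
  ∃ a b c d : X, Lt le a b ∧ Lt le c d ∧
    Incomp le a c ∧ Incomp le a d ∧ Incomp le b c ∧ Incomp le b d

/-- The poset `3 ⊕ 1` embeds into `le`. -/
def Embeds3p1 (le : X → X → Prop) : Prop :=
  ∃ a b c d : X, Lt le a b ∧ Lt le b c ∧ Incomp le d a ∧ Incomp le d b ∧ Incomp le d c

/-- The poset `1 ⊕ 2` embeds into `le`. -/
def Embeds1p2 (le : X → X → Prop) : Prop :=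
  ∃ a b c : X, Lt le a b ∧ Incomp le c a ∧ Incomp le c b

section Aux

variable {X : Type*}

lemma lt_of_le_lt {le : X → X → Prop} (hpo : IsPartialOrderRel le) {x y z : X}
    (h : le x y) (h' : Lt le y z) : Lt le x z :=
  ⟨hpo.2.1 _ _ _ h h'.1, fun hzx => h'.2 (hpo.2.1 _ _ _ hzx h)⟩

lemma lt_of_lt_le {le : X → X → Prop} (hpo : IsPartialOrderRel le) {x y z : X}
    (h : Lt le x y) (h' : le y z) : Lt le x z :=
  ⟨hpo.2.1 _ _ _ h.1 h', fun hzx => h.2 (hpo.2.1 _ _ _ h' hzx)⟩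

lemma lt_trans' {le : X → X → Prop} (hpo : IsPartialOrderRel le) {x y z : X}
    (h : Lt le x y) (h' : Lt le y z) : Lt le x z :=
  lt_of_le_lt hpo h.1 h'

lemma eq_of_le_not_lt {le : X → X → Prop} (hpo : IsPartialOrderRel le) {x y : X}
    (hle : le x y) (h : ¬ Lt le x y) : x = y := by
  have hyx : le y x := by
    by_contra h2
    exact h ⟨hle, h2⟩
  exact hpo.2.2 _ _ hle hyx

lemma predLe_total {le : X → X → Prop} (hpo : IsPartialOrderRel le)
    (h22 : ¬ Embeds2p2 le) : ∀ x y, PredLe le x y ∨ PredLe le y x := by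
  intro x y
  by_contra hcon
  push_neg at hcon
  obtain ⟨hx, hy⟩ := hcon
  unfold PredLe at hx hy
  push_neg at hx hy
  obtain ⟨a, hax, hay⟩ := hx
  obtain ⟨c, hcy, hcx⟩ := hy
  apply h22
  refine ⟨a, x, c, y, hax, hcy, ⟨?_, ?_⟩, ⟨?_, ?_⟩, ⟨?_, ?_⟩, ⟨?_, ?_⟩⟩
  · -- ¬ le a c
    intro h; exact hay (lt_of_le_lt hpo h hcy)
  · -- ¬ le c a
    intro h; exact hcx (lt_of_le_lt hpo h hax)
  · -- ¬ le a y
    intro h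
    have he : a = y := eq_of_le_not_lt hpo h hay
    subst he
    exact hcx (lt_trans' hpo hcy hax)
  · -- ¬ le y a
    intro h; exact hcx (lt_trans' hpo hcy (lt_of_le_lt hpo h hax))
  · -- ¬ le x c
    intro h; exact hay (lt_trans' hpo hax (lt_of_le_lt hpo h hcy))
  · -- ¬ le c x
    intro h
    have he : c = x := eq_of_le_not_lt hpo h hcx
    subst he
    exact hay (lt_trans' hpo hax hcy)
  · -- ¬ le x y
    intro h; exact hay (lt_of_lt_le hpo hax h)
  · -- ¬ le y x
    intro h; exact hcx (lt_of_lt_le hpo hcy h)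

lemma succLe_total {le : X → X → Prop} (hpo : IsPartialOrderRel le)
    (h22 : ¬ Embeds2p2 le) : ∀ x y, SuccLe le x y ∨ SuccLe le y x := by
  intro x y
  have hpo' : IsPartialOrderRel (fun a b => le b a) :=
    ⟨hpo.1, fun a b c h h' => hpo.2.1 _ _ _ h' h, fun a b h h' => hpo.2.2 _ _ h' h⟩
  have h22' : ¬ Embeds2p2 (fun a b => le b a) := by
    rintro ⟨a, b, c, d, h1, h2, h3, h4, h5, h6⟩
    exact h22 ⟨b, a, d, c, h1, h2, ⟨h6.2, h6.1⟩, ⟨h5.2, h5.1⟩, ⟨h4.2, h4.1⟩, ⟨h3.2, h3.1⟩⟩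
  exact predLe_total hpo' h22' y x

lemma embeds3p1_of {le : X → X → Prop} (hpo : IsPartialOrderRel le) {x y : X}
    (hP : ¬ PredLe le x y) (hS : ¬ SuccLe le y x) : Embeds3p1 le := by
  unfold PredLe at hP
  unfold SuccLe at hS
  push_neg at hP hS
  obtain ⟨a, hax, hay⟩ := hP
  obtain ⟨c, hxc, hyc⟩ := hS
  have hyx : ¬ le y x := fun h => hyc (lt_of_le_lt hpo h hxc)
  have hxy : ¬ le x y := fun h => hay (lt_of_lt_le hpo hax h)
  refine ⟨a, x, c, y, hax, hxc, ⟨?_, ?_⟩, ⟨hyx, hxy⟩, ⟨?_, ?_⟩⟩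
  · -- ¬ le y a
    intro h; exact hyx (hpo.2.1 _ _ _ h hax.1)
  · -- ¬ le a y
    intro h
    have he : a = y := eq_of_le_not_lt hpo h hay
    subst he
    exact hyx hax.1
  · -- ¬ le y c
    intro h
    have he : y = c := eq_of_le_not_lt hpo h hyc
    subst he
    exact hxy hxc.1
  · -- ¬ le c y
    intro h; exact hxy (hpo.2.1 _ _ _ hxc.1 h)

lemma trace_total {le : X → X → Prop} (hpo : IsPartialOrderRel le)
    (h22 : ¬ Embeds2p2 le) (h31 : ¬ Embeds3p1 le) :
    ∀ x y, (PredLe le x y ∧ SuccLe le x y) ∨ (PredLe le y x ∧ SuccLe le y x) := by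
  intro x y
  by_cases h1 : PredLe le x y
  · by_cases h2 : SuccLe le x y
    · exact Or.inl ⟨h1, h2⟩
    · by_cases h3 : PredLe le y x
      · rcases succLe_total hpo h22 x y with h4 | h4
        · exact absurd h4 h2
        · exact Or.inr ⟨h3, h4⟩
      · exact absurd (embeds3p1_of hpo h3 h2) h31
  · by_cases h2 : SuccLe le y x
    · rcases predLe_total hpo h22 x y with h3 | h3
      · exact absurd h3 h1
      · exact Or.inr ⟨h3, h2⟩
    · exact absurd (embeds3p1_of hpo h1 h2) h31

end Aux

section GroupAux

variable {G : Type*} [AddGroup G] {le : G → G → Prop}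

lemma isCompat_cancel (hc : IsCompat le) (a b : G) {x y : G}
    (h : le (a + x + b) (a + y + b)) : le x y := by
  have h2 := hc (-a) (-b) _ _ h
  simpa [add_assoc] using h2

lemma isCompat_lt (hc : IsCompat le) (a b : G) {x y : G} (h : Lt le x y) :
    Lt le (a + x + b) (a + y + b) :=
  ⟨hc a b _ _ h.1, fun h' => h.2 (isCompat_cancel hc a b h')⟩

lemma predLe_compat (hc : IsCompat le) : IsCompat (PredLe le) := by
  intro a b x y h z hz
  have e1 : -a + (a + x + b) + -b = x := by simp [add_assoc]
  have e2 : a + (-a + z + -b) + b = z := by simp [add_assoc]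
  have h2 := isCompat_lt hc (-a) (-b) hz
  rw [e1] at h2
  have h3 := isCompat_lt hc a b (h _ h2)
  rwa [e2] at h3

lemma succLe_compat (hc : IsCompat le) : IsCompat (SuccLe le) := by
  intro a b x y h z hz
  have e1 : -a + (a + y + b) + -b = y := by simp [add_assoc]
  have e2 : a + (-a + z + -b) + b = z := by simp [add_assoc]
  have h2 := isCompat_lt hc (-a) (-b) hz
  rw [e1] at h2
  have h3 := isCompat_lt hc a b (h _ h2)
  rwa [e2] at h3

lemma semi_to_quot :
    (∃ le : G → G → Prop, IsPartialOrderRel le ∧ IsCompat le ∧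
        ¬ Embeds2p2 le ∧ ¬ Embeds3p1 le ∧ ∃ x y : G, x ≠ y ∧ le x y) →
      (∃ (H : AddSubgroup G) (hN : H.Normal), H ≠ ⊤ ∧
        ∃ r : G ⧸ H → G ⧸ H → Prop,
          IsPartialOrderRel r ∧ IsTotalRel r ∧
          @IsCompat (G ⧸ H) (@QuotientAddGroup.Quotient.addGroup G _ H hN) r) := by
  rintro ⟨le, hpo, hc, h22, h31, x0, y0, hne, hxy⟩
  set Q : G → G → Prop := fun x y => PredLe le x y ∧ SuccLe le x y with hQdef
  have hQr : ∀ x, Q x x := fun x => ⟨fun z h => h, fun z h => h⟩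
  have hQt : ∀ x y z, Q x y → Q y z → Q x z := fun x y z h h' =>
    ⟨fun w hw => h'.1 w (h.1 w hw), fun w hw => h.2 w (h'.2 w hw)⟩
  have hQc : IsCompat Q := fun a b x y h =>
    ⟨predLe_compat hc a b x y h.1, succLe_compat hc a b x y h.2⟩
  have hQtot := trace_total hpo h22 h31
  have sh1 : ∀ x y : G, Q x y → Q 0 (-x + y) := by
    intro x y h
    have h2 := hQc (-x) 0 x y h
    simpa using h2
  have sh2 : ∀ x y : G, Q 0 (-x + y) → Q x y := by
    intro x y h
    have h2 := hQc x 0 0 (-x + y) h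
    simpa using h2
  have sh3 : ∀ x y : G, Q y x → Q (-x + y) 0 := by
    intro x y h
    have h2 := hQc (-x) 0 y x h
    simpa using h2
  obtain ⟨H, hmem⟩ : ∃ H : AddSubgroup G, ∀ g, g ∈ H ↔ Q 0 g ∧ Q g 0 := by
    refine ⟨{ carrier := {g | Q 0 g ∧ Q g 0},
              zero_mem' := ⟨hQr 0, hQr 0⟩,
              add_mem' := ?_, neg_mem' := ?_ }, fun g => Iff.rfl⟩
    · rintro a b ⟨ha1, ha2⟩ ⟨hb1, hb2⟩
      have t1 : Q a (a + b) := by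
        have h2 := hQc a 0 0 b hb1
        simpa using h2
      have t2 : Q (a + b) a := by
        have h2 := hQc a 0 b 0 hb2
        simpa using h2
      exact ⟨hQt _ _ _ ha1 t1, hQt _ _ _ t2 ha2⟩
    · rintro a ⟨ha1, ha2⟩
      constructor
      · have h2 := hQc (-a) 0 a 0 ha2
        simpa using h2
      · have h2 := hQc (-a) 0 0 a ha1
        simpa using h2
  have hN : H.Normal := by
    refine ⟨fun n hn g => (hmem _).2 ⟨?_, ?_⟩⟩
    · have h2 := hQc g (-g) 0 n ((hmem n).1 hn).1
      simpa using h2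
    · have h2 := hQc g (-g) n 0 ((hmem n).1 hn).2
      simpa using h2
  haveI := hN
  have hlt0 : Lt le x0 y0 := ⟨hxy, fun h => hne (hpo.2.2 _ _ hxy h)⟩
  have hnot : ¬ Q y0 x0 := by
    intro h
    have h2 := h.1 x0 hlt0
    exact h2.2 h2.1
  have hcoset : ∀ x y : G, (QuotientAddGroup.mk x : G ⧸ H) = QuotientAddGroup.mk y → Q x y := by
    intro x y h
    have hm : -x + y ∈ H := QuotientAddGroup.eq.1 h
    exact sh2 x y ((hmem _).1 hm).1
  refine ⟨H, hN, ?_, fun u v => ∃ x y : G,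
      QuotientAddGroup.mk x = u ∧ QuotientAddGroup.mk y = v ∧ Q x y, ⟨?_, ?_, ?_⟩, ?_, ?_⟩
  · -- H ≠ ⊤
    intro hT
    have hm : (-x0 + y0) ∈ H := hT ▸ AddSubgroup.mem_top _
    have h2 : Q (-x0 + y0) 0 := ((hmem _).1 hm).2
    apply hnot
    have h3 := hQc x0 0 _ _ h2
    simpa using h3
  · -- refl
    intro u
    obtain ⟨x, rfl⟩ := QuotientAddGroup.mk_surjective u
    exact ⟨x, x, rfl, rfl, hQr x⟩
  · -- trans
    rintro u v w ⟨x, y, rfl, hyv, hq1⟩ ⟨y', z, hy'v, rfl, hq2⟩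
    have hyy' : Q y y' := hcoset _ _ (hyv.trans hy'v.symm)
    exact ⟨x, z, rfl, rfl, hQt _ _ _ hq1 (hQt _ _ _ hyy' hq2)⟩
  · -- antisym
    rintro u v ⟨x, y, rfl, hyv, h1⟩ ⟨y', x', hy'v, hx'u, h2⟩
    have hyy' : Q y y' := hcoset _ _ (hyv.trans hy'v.symm)
    have hx'x : Q x' x := hcoset _ _ hx'u
    have hyx : Q y x := hQt _ _ _ hyy' (hQt _ _ _ h2 hx'x)
    have hm : -x + y ∈ H := (hmem _).2 ⟨sh1 _ _ h1, sh3 _ _ hyx⟩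
    rw [← hyv]
    exact QuotientAddGroup.eq.2 hm
  · -- total
    intro u v
    obtain ⟨x, rfl⟩ := QuotientAddGroup.mk_surjective u
    obtain ⟨y, rfl⟩ := QuotientAddGroup.mk_surjective v
    rcases hQtot x y with h | h
    · exact Or.inl ⟨x, y, rfl, rfl, h⟩
    · exact Or.inr ⟨y, x, rfl, rfl, h⟩
  · -- compat
    rintro a b u v ⟨x, y, rfl, rfl, hq⟩
    obtain ⟨a0, rfl⟩ := QuotientAddGroup.mk_surjective a
    obtain ⟨b0, rfl⟩ := QuotientAddGroup.mk_surjective b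
    refine ⟨a0 + x + b0, a0 + y + b0, ?_, ?_, hQc a0 b0 x y hq⟩
    · rw [QuotientAddGroup.mk_add, QuotientAddGroup.mk_add]
    · rw [QuotientAddGroup.mk_add, QuotientAddGroup.mk_add]

lemma quot_to_weak :
      (∃ (H : AddSubgroup G) (hN : H.Normal), H ≠ ⊤ ∧
        ∃ r : G ⧸ H → G ⧸ H → Prop,
          IsPartialOrderRel r ∧ IsTotalRel r ∧
          @IsCompat (G ⧸ H) (@QuotientAddGroup.Quotient.addGroup G _ H hN) r) →
    (∃ le : G → G → Prop, IsPartialOrderRel le ∧ IsCompat le ∧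
        ¬ Embeds1p2 le ∧ ∃ x y : G, x ≠ y ∧ le x y) := by
  rintro ⟨H, hN, hneT, r, hr, htot, hcomp⟩
  haveI := hN
  refine ⟨fun x y => Lt r (QuotientAddGroup.mk x) (QuotientAddGroup.mk y) ∨ x = y,
    ⟨?_, ?_, ?_⟩, ?_, ?_, ?_⟩
  · intro x; exact Or.inr rfl
  · rintro x y z (h1 | rfl) (h2 | rfl)
    · exact Or.inl (lt_trans' hr h1 h2)
    · exact Or.inl h1
    · exact Or.inl h2
    · exact Or.inr rfl
  · rintro x y (h1 | rfl) (h2 | he)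
    · exact (h1.2 h2.1).elim
    · exact he.symm
    · rfl
    · rfl
  · -- compat
    rintro a b x y (h | rfl)
    · left
      have h2 := isCompat_lt hcomp (QuotientAddGroup.mk a) (QuotientAddGroup.mk b) h
      rwa [← QuotientAddGroup.mk_add, ← QuotientAddGroup.mk_add,
        ← QuotientAddGroup.mk_add, ← QuotientAddGroup.mk_add] at h2
    · exact Or.inr rfl
  · -- no 1 ⊕ 2
    rintro ⟨a, b, c, hab, hca, hcb⟩
    have key : ∀ u v : G,
        Incomp (fun x y => Lt r (QuotientAddGroup.mk x) (QuotientAddGroup.mk y) ∨ x = y) u v →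
        (QuotientAddGroup.mk u : G ⧸ H) = QuotientAddGroup.mk v := by
      intro u v h
      obtain ⟨h1, h2⟩ := h
      have h1' : ¬ Lt r (QuotientAddGroup.mk u) (QuotientAddGroup.mk v) :=
        fun hl => h1 (Or.inl hl)
      have h2' : ¬ Lt r (QuotientAddGroup.mk v) (QuotientAddGroup.mk u) :=
        fun hl => h2 (Or.inl hl)
      rcases htot (QuotientAddGroup.mk u) (QuotientAddGroup.mk v) with h | h
      · have hvu : r (QuotientAddGroup.mk v) (QuotientAddGroup.mk u) := by
          by_contra hh; exact h1' ⟨h, hh⟩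
        exact hr.2.2 _ _ h hvu
      · have huv : r (QuotientAddGroup.mk u) (QuotientAddGroup.mk v) := by
          by_contra hh; exact h2' ⟨h, hh⟩
        exact hr.2.2 _ _ huv h
    have e1 := key c a hca
    have e2 := key c b hcb
    have hltr : Lt r (QuotientAddGroup.mk a) (QuotientAddGroup.mk b) := by
      rcases hab.1 with h | rfl
      · exact h
      · exact absurd (Or.inr rfl) hab.2
    rw [← e1, ← e2] at hltr
    exact hltr.2 hltr.1
  · -- nontrivial
    obtain ⟨g, hg⟩ : ∃ g, g ∉ H := by
      by_contra h
      push_neg at h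
      exact hneT ((AddSubgroup.eq_top_iff' H).2 h)
    have hg0 : (QuotientAddGroup.mk g : G ⧸ H) ≠ QuotientAddGroup.mk 0 := by
      intro h
      apply hg
      have hm := QuotientAddGroup.eq.1 h.symm
      simpa using hm
    rcases htot (QuotientAddGroup.mk g) (QuotientAddGroup.mk 0) with h | h
    · refine ⟨g, 0, ?_, Or.inl ⟨h, ?_⟩⟩
      · intro he; exact hg0 (by rw [he])
      · intro hba; exact hg0 (hr.2.2 _ _ h hba)
    · refine ⟨0, g, ?_, Or.inl ⟨h, ?_⟩⟩
      · intro he; exact hg0 (by rw [he])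
      · intro hba; exact hg0 (hr.2.2 _ _ hba h)

lemma weak_to_semi :
    (∃ le : G → G → Prop, IsPartialOrderRel le ∧ IsCompat le ∧
        ¬ Embeds1p2 le ∧ ∃ x y : G, x ≠ y ∧ le x y) →
    (∃ le : G → G → Prop, IsPartialOrderRel le ∧ IsCompat le ∧
        ¬ Embeds2p2 le ∧ ¬ Embeds3p1 le ∧ ∃ x y : G, x ≠ y ∧ le x y) := by
  rintro ⟨le, hpo, hc, h12, hnt⟩
  refine ⟨le, hpo, hc, ?_, ?_, hnt⟩
  · rintro ⟨a, b, c, d, hab, hcd, hac, had, hbc, hbd⟩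
    exact h12 ⟨a, b, c, hab, ⟨hac.2, hac.1⟩, ⟨hbc.2, hbc.1⟩⟩
  · rintro ⟨a, b, c, d, hab, hbc, hda, hdb, hdc⟩
    exact h12 ⟨a, b, d, hab, hda, hdb⟩

end GroupAux

/-- For a group `G` the following are equivalent: (i) `G` carries a
compatible semiorder distinct from equality; (ii) `G` carries a compatible weak order
distinct from equality; (iii) `G` has a proper normal subgroup `H` such that `G/H`
admits a compatible total order. -/


theorem exists_semiorder_iff_exists_totally_orderable_quotient (G : Type*) [AddGroup G] :
    ((∃ le : G → G → Prop, IsPartialOrderRel le ∧ IsCompat le ∧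
        ¬ Embeds2p2 le ∧ ¬ Embeds3p1 le ∧ ∃ x y : G, x ≠ y ∧ le x y) ↔
      (∃ le : G → G → Prop, IsPartialOrderRel le ∧ IsCompat le ∧
        ¬ Embeds1p2 le ∧ ∃ x y : G, x ≠ y ∧ le x y)) ∧
    ((∃ le : G → G → Prop, IsPartialOrderRel le ∧ IsCompat le ∧
        ¬ Embeds2p2 le ∧ ¬ Embeds3p1 le ∧ ∃ x y : G, x ≠ y ∧ le x y) ↔
      (∃ (H : AddSubgroup G) (hN : H.Normal), H ≠ ⊤ ∧
        ∃ r : G ⧸ H → G ⧸ H → Prop,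
          IsPartialOrderRel r ∧ IsTotalRel r ∧
          @IsCompat (G ⧸ H) (@QuotientAddGroup.Quotient.addGroup G _ H hN) r)) := by
  exact ⟨⟨fun h => quot_to_weak (semi_to_quot h), weak_to_semi⟩,
    ⟨semi_to_quot, fun h => weak_to_semi (quot_to_weak h)⟩⟩

end ThrPaper
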